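/- Let (L,R) be an algebraic weak factorization system on M and let (f,s) and (g,t) be R-algebras with cod f = dom g. Then gf carries the R-algebra structure t•s = s ∘ E(1, t ∘ E(f,1)) ∘ δ_{gf}, and this satisfies the unit condition: (t•s) ∘ L(gf) = id, so (gf, t•s) is an algebra for the pointed endofunctor (R,η). -/
import Mathlib


open CategoryTheory

universe v u

/-- A functorial factorization on `M`: every arrow `f` factors as `r f ∘ l f`,
functorially in commutative squares. -/
structure FunctFact (M : Type u) [Category.{v} M] where
  E : ∀ {X Y : M}, (X ⟶ Y) → M
  l : ∀ {X Y : M} (f : X ⟶ Y), X ⟶ E f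
  r : ∀ {X Y : M} (f : X ⟶ Y), E f ⟶ Y
  fact : ∀ {X Y : M} (f : X ⟶ Y), l f ≫ r f = f
  map : ∀ {X Y X' Y' : M} {f : X ⟶ Y} {g : X' ⟶ Y'} (u : X ⟶ X') (v : Y ⟶ Y'),
    f ≫ v = u ≫ g → (E f ⟶ E g)
  map_l : ∀ {X Y X' Y' : M} {f : X ⟶ Y} {g : X' ⟶ Y'} (u : X ⟶ X') (v : Y ⟶ Y')
    (h : f ≫ v = u ≫ g), l f ≫ map u v h = u ≫ l g
  map_r : ∀ {X Y X' Y' : M} {f : X ⟶ Y} {g : X' ⟶ Y'} (u : X ⟶ X') (v : Y ⟶ Y')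
    (h : f ≫ v = u ≫ g), r f ≫ v = map u v h ≫ r g
  map_id : ∀ {X Y : M} (f : X ⟶ Y), map (𝟙 X) (𝟙 Y) (by simp) = 𝟙 (E f)
  map_comp : ∀ {X Y X' Y' X'' Y'' : M} {f : X ⟶ Y} {g : X' ⟶ Y'} {h : X'' ⟶ Y''}
    (u : X ⟶ X') (v : Y ⟶ Y') (u' : X' ⟶ X'') (v' : Y' ⟶ Y'')
    (h₁ : f ≫ v = u ≫ g) (h₂ : g ≫ v' = u' ≫ h),
    map (u ≫ u') (v ≫ v')
      (by rw [← Category.assoc, h₁, Category.assoc, h₂, ← Category.assoc]) =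
      map u v h₁ ≫ map u' v' h₂

/-- An algebraic weak factorization system on `M`: a functorial factorization whose
left functor underlies a comonad (comultiplication `δ`) and whose right functor
underlies a monad (multiplication `μ`), subject to the distributive law. -/
structure AWFS (M : Type u) [Category.{v} M] extends FunctFact M where
  δ : ∀ {X Y : M} (f : X ⟶ Y), E f ⟶ E (l f)
  μ : ∀ {X Y : M} (f : X ⟶ Y), E (r f) ⟶ E f
  l_δ : ∀ {X Y : M} (f : X ⟶ Y), l f ≫ δ f = l (l f)
  δ_r : ∀ {X Y : M} (f : X ⟶ Y), δ f ≫ r (l f) = 𝟙 (E f)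
  l_μ : ∀ {X Y : M} (f : X ⟶ Y), l (r f) ≫ μ f = 𝟙 (E f)
  μ_r : ∀ {X Y : M} (f : X ⟶ Y), μ f ≫ r f = r (r f)
  δ_nat : ∀ {X Y X' Y' : M} {f : X ⟶ Y} {g : X' ⟶ Y'} (u : X ⟶ X') (v : Y ⟶ Y')
    (h : f ≫ v = u ≫ g),
    δ f ≫ map u (map u v h) (map_l u v h) = map u v h ≫ δ g
  μ_nat : ∀ {X Y X' Y' : M} {f : X ⟶ Y} {g : X' ⟶ Y'} (u : X ⟶ X') (v : Y ⟶ Y')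
    (h : f ≫ v = u ≫ g),
    μ f ≫ map u v h = map (map u v h) v (map_r u v h) ≫ μ g
  δ_coassoc : ∀ {X Y : M} (f : X ⟶ Y) (pf : l f ≫ δ f = 𝟙 X ≫ l (l f)),
    δ f ≫ δ (l f) = δ f ≫ map (𝟙 X) (δ f) pf
  μ_assoc : ∀ {X Y : M} (f : X ⟶ Y) (pf : r (r f) ≫ 𝟙 Y = μ f ≫ r f),
    μ (r f) ≫ μ f = map (μ f) (𝟙 Y) pf ≫ μ f
  distrib : ∀ {X Y : M} (f : X ⟶ Y) (pf : l (r f) ≫ μ f = δ f ≫ r (l f)),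
    μ f ≫ δ f = δ (r f) ≫ map (δ f) (μ f) pf ≫ μ (l f)

/-- The canonical algebra structure `t • s` on a composite `f ≫ g` of two
`R`-algebras `(f, s)` and `(g, t)`: `t • s = s ∘ E(1, t ∘ E(f,1)) ∘ δ_{gf}`. -/
def AWFS.comp {M : Type u} [Category.{v} M] (F : AWFS M) {X Y Z : M}
    (f : X ⟶ Y) (g : Y ⟶ Z) (s : F.E f ⟶ X) (t : F.E g ⟶ Y)
    (ht : F.l g ≫ t = 𝟙 Y) : F.E (f ≫ g) ⟶ X :=
  F.δ (f ≫ g) ≫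
    F.map (𝟙 X) (F.map f (𝟙 Z) (by simp) ≫ t)
      (by rw [← Category.assoc, F.map_l, Category.assoc, ht, Category.comp_id,
            Category.id_comp]) ≫ s

/-- The canonical composite `t • s` of the algebra structures of composable
`R`-algebras `(f, s)` and `(g, t)` satisfies the unit condition
`(t • s) ∘ L(gf) = id`, so `(g ≫ f, t • s)` is an algebra for the pointed
endofunctor `(R, η)`. -/
theorem stmt8 {M : Type u} [Category.{v} M] (F : AWFS M) {X Y Z : M}
    (f : X ⟶ Y) (g : Y ⟶ Z)
    (s : F.E f ⟶ X) (t : F.E g ⟶ Y)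
    (hs1 : F.l f ≫ s = 𝟙 X) (hs2 : s ≫ f = F.r f)
    (ht1 : F.l g ≫ t = 𝟙 Y) (ht2 : t ≫ g = F.r g) :
    F.l (f ≫ g) ≫ F.comp f g s t ht1 = 𝟙 X ∧
      F.comp f g s t ht1 ≫ (f ≫ g) = F.r (f ≫ g) := by
  constructor
  · unfold AWFS.comp
    rw [← Category.assoc, F.l_δ, ← Category.assoc, F.map_l, Category.assoc, hs1,
      Category.comp_id]
  · unfold AWFS.comp
    slice_lhs 3 4 => rw [hs2]
    slice_lhs 2 3 => rw [← F.map_r]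
    slice_lhs 1 2 => rw [F.δ_r]
    slice_lhs 3 4 => rw [ht2]
    slice_lhs 2 3 => rw [← F.map_r f (𝟙 Z)]
    simp
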